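/- arXiv:math/0502027 — 2 statements merged into one kernel-verified Lean document; each statement's English description precedes it below -/
import Mathlib

section
/- Let T : P_n → P_n be a nonzero linear operator. If there exists C > 0 such that for every nonconstant f ∈ P_n some root of f and some root of Tf are within distance C of each other, then T = a_0 I + a_1 D + ... + a_n D^n with a_0 = (Tφ_0)(0) ≠ 0 and a_k = (Tφ_k)(0); in particular T is an invertible element of 𝒟(P_n). -/
open Polynomial

/-- `P n` is the space of complex polynomials of degree at most `n`. -/
noncomputable def Pn (n : ℕ) : Submodule ℂ (Polynomial ℂ) := Polynomial.degreeLT ℂ (n + 1)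

noncomputable instance instPnEndAddCommGroup (n : ℕ) : AddCommGroup (Module.End ℂ (Pn n)) :=
  LinearMap.addCommGroup

noncomputable instance instPnEndRing (n : ℕ) : Ring (Module.End ℂ (Pn n)) := Module.End.instRing

/-- The differentiation operator on `Pn n`. -/
noncomputable def Dop (n : ℕ) : Module.End ℂ (Pn n) :=
  (Polynomial.derivative (R := ℂ)).restrict (p := Pn n) (q := Pn n)
    (fun f hf => by
      simp only [Pn, Polynomial.mem_degreeLT] at *
      exact lt_of_le_of_lt (Polynomial.degree_derivative_le) hf)

/-- `calD n` is the span of `I, D, D^2, ..., D^n` in `L(Pn n)`. -/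
noncomputable def calD (n : ℕ) : Submodule ℂ (Module.End ℂ (Pn n)) :=
  Submodule.span ℂ (Set.range fun k : Fin (n + 1) => (Dop n) ^ (k : ℕ))

/-- `φ_k(z) = z^k / k!` as an element of `Pn n` (for `k ≤ n`). -/
noncomputable def phiP (n k : ℕ) (h : k ≤ n) : Pn n :=
  ⟨Polynomial.C (((Nat.factorial k : ℂ))⁻¹) * Polynomial.X ^ k, by
    rw [Pn, Polynomial.mem_degreeLT]
    exact lt_of_le_of_lt (Polynomial.degree_C_mul_X_pow_le _ _)
      (by exact_mod_cast Nat.lt_succ_of_le h)⟩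

open Finset

noncomputable def Complex.abs : AbsoluteValue ℂ ℝ := IsAbsoluteValue.toAbsoluteValue (norm : ℂ → ℝ)

lemma Complex.norm_eq_abs (z : ℂ) : ‖z‖ = Complex.abs z := rfl

lemma Complex.abs_ofReal (r : ℝ) : Complex.abs (r : ℂ) = |r| := by
  rw [← Complex.norm_eq_abs, Complex.norm_real, Real.norm_eq_abs]

lemma Complex.abs_natCast (k : ℕ) : Complex.abs (k : ℂ) = k := Complex.norm_natCast k

lemma degLe0_of_bdd (P : Polynomial ℂ) (M : ℝ)
    (h : ∀ R : ℝ, ∃ z : ℂ, R ≤ Complex.abs z ∧ Complex.abs (P.eval z) ≤ M) :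
    P.degree ≤ 0 := by
  by_contra hd
  push_neg at hd
  choose z hz hbd using h
  have hz' : Filter.Tendsto (fun k : ℕ => ‖z k‖) Filter.atTop Filter.atTop := by
    refine Filter.tendsto_atTop_mono (fun k => ?_) tendsto_natCast_atTop_atTop
    simpa [Complex.norm_eq_abs] using hz (k : ℝ)
  have := (P.tendsto_norm_atTop hd hz').eventually_gt_atTop M
  rcases this.exists with ⟨k, hk⟩
  exact absurd (by simpa [Complex.norm_eq_abs] using hbd (k : ℝ)) (not_le.mpr hk)

lemma eval_bound (p : Polynomial ℂ) (n : ℕ) (hp : p.natDegree ≤ n) :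
    ∃ M : ℝ, 0 ≤ M ∧ ∀ z : ℂ, Complex.abs (p.eval z) ≤ M * (1 + Complex.abs z) ^ n := by
  refine ⟨∑ i ∈ range (n+1), Complex.abs (p.coeff i),
    Finset.sum_nonneg fun i _ => (Complex.abs.nonneg _), fun z => ?_⟩
  have h1 : (0:ℝ) ≤ Complex.abs z := Complex.abs.nonneg z
  have hb : (1:ℝ) ≤ 1 + Complex.abs z := by linarith
  rw [p.eval_eq_sum_range' (Nat.lt_succ_of_le hp)]
  refine le_trans (by simpa using Complex.abs.sum_le (range (n+1)) fun i => p.coeff i * z ^ i) ?_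
  rw [Finset.sum_mul]
  refine Finset.sum_le_sum fun i hi => ?_
  refine mul_le_mul_of_nonneg_left ?_ (Complex.abs.nonneg _)
  calc Complex.abs z ^ i ≤ (1 + Complex.abs z) ^ i :=
        pow_le_pow_left₀ h1 (by linarith) i
    _ ≤ (1 + Complex.abs z) ^ n := pow_le_pow_right₀ hb (by
        have := Finset.mem_range.mp hi; omega)

lemma core (n : ℕ) (hn : 0 < n) (q : ℕ → Polynomial ℂ)
    (hdeg : ∀ j, j ≤ n → (q j).natDegree ≤ n)
    (C : ℝ) (hC : 0 < C)
    (H : ∀ p : Polynomial ℂ, p.degree < ((n+1 : ℕ) : WithBot ℕ) → 0 < p.degree →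
      ∃ u v, p.IsRoot u ∧ (∑ j ∈ range (n+1), Polynomial.C (p.coeff j) * q j).IsRoot v ∧
        Complex.abs (u - v) ≤ C) :
    ∀ m, m ≤ n → q m = ∑ k ∈ range (m+1),
      ((q k).eval 0 / (Nat.factorial k : ℂ)) • (Polynomial.derivative^[k] (X ^ m : Polynomial ℂ)) := by
  intro m
  induction m using Nat.strong_induction_on with
  | _ m IH =>
  intro hm
  rcases Nat.eq_zero_or_pos m with rfl | hm1
  · have hq0deg : (q 0).degree ≤ 0 := by
      obtain ⟨Mn, hMn0, hMn⟩ := eval_bound (q n) n (hdeg n le_rfl)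
      apply degLe0_of_bdd _ (Mn * (2 + C) ^ n)
      intro R
      set s : ℝ := max (R + C) 1 with hs
      have hs1 : (1:ℝ) ≤ s := le_max_right _ _
      have hs0 : (0:ℝ) < s := lt_of_lt_of_le one_pos hs1
      set t : ℂ := ((s : ℂ)) ^ n with ht
      set p : Polynomial ℂ := X ^ n + Polynomial.C t with hp
      have hdp : p.degree = n := degree_X_pow_add_C hn t
      obtain ⟨u, v, hu, hv, huv⟩ := H p (by rw [hdp]; exact_mod_cast Nat.lt_succ_self n)
        (by rw [hdp]; exact_mod_cast hn)
      -- |u| = s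
      have hu' : u ^ n = -t := by
        have := hu
        simp only [IsRoot, hp, eval_add, eval_pow, eval_X, eval_C] at this
        linear_combination this
      have habs : Complex.abs u = s := by
        have h1 : (Complex.abs u) ^ n = s ^ n := by
          rw [← map_pow, hu', map_neg_eq_map, ht, map_pow, Complex.abs_ofReal,
            abs_of_pos hs0]
        exact (pow_left_inj₀ (Complex.abs.nonneg u) (le_of_lt hs0) hn.ne').mp h1
      -- the sum is C t * q 0 + q n
      have hsum : (∑ j ∈ range (n+1), Polynomial.C (p.coeff j) * q j)
          = Polynomial.C t * q 0 + q n := by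
        have heach : ∀ j ∈ range (n+1), Polynomial.C (p.coeff j) * q j
            = ((if j = n then q j else 0) + if j = 0 then Polynomial.C t * q j else 0) := by
          intro j _
          rw [hp, coeff_add, coeff_X_pow, coeff_C, map_add, add_mul]
          by_cases h0 : j = 0
          · subst h0
            simp [hn.ne', (Ne.symm hn.ne' : (0:ℕ) ≠ n)]
          · by_cases hjn : j = n <;> simp [h0, hjn, hn.ne']
        rw [Finset.sum_congr rfl heach, Finset.sum_add_distrib,
          Finset.sum_ite_eq' (range (n+1)) 0, Finset.sum_ite_eq' (range (n+1)) n]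
        have h0m : (0:ℕ) ∈ range (n+1) := by simp
        have hnm : n ∈ range (n+1) := by simp
        rw [if_pos h0m, if_pos hnm, add_comm]
      rw [hsum] at hv
      have hveq : t * (q 0).eval v + (q n).eval v = 0 := by
        have := hv; simpa [IsRoot] using this
      refine ⟨v, ?_, ?_⟩
      · -- R ≤ |v|
        have : s - C ≤ Complex.abs v := by
          have h2 : Complex.abs u - Complex.abs v ≤ C :=
            le_trans (by simpa [Complex.norm_eq_abs] using norm_sub_norm_le u v) huv
          rw [habs] at h2; linarith
        have : R ≤ s - C := by
          have := le_max_left (R + C) 1; linarith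
        linarith
      · -- |q0 v| bound
        have hvle : Complex.abs v ≤ s + C := by
          have h2 : Complex.abs v - Complex.abs u ≤ C :=
            le_trans (by simpa [Complex.norm_eq_abs] using norm_sub_norm_le v u)
              (by rwa [Complex.abs.map_sub] at huv)
          rw [habs] at h2; linarith
        have h3 : s ^ n * Complex.abs ((q 0).eval v) = Complex.abs ((q n).eval v) := by
          have : t * (q 0).eval v = -((q n).eval v) := by linear_combination hveq
          have h4 := congrArg Complex.abs this
          rwa [map_mul, map_neg_eq_map, ht, map_pow, Complex.abs_ofReal, abs_of_pos hs0] at h4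
        have h5 : Complex.abs ((q n).eval v) ≤ Mn * ((2 + C) * s) ^ n := by
          refine le_trans (hMn v) ?_
          have : (1 + Complex.abs v) ≤ (2 + C) * s := by
            have := Complex.abs.nonneg v
            nlinarith
          gcongr
        have hsn : (0:ℝ) < s ^ n := pow_pos hs0 n
        rw [mul_pow] at h5
        calc Complex.abs ((q 0).eval v) = (s ^ n * Complex.abs ((q 0).eval v)) / s ^ n := by
              field_simp
          _ ≤ (Mn * ((2+C)^n * s^n)) / s ^ n := by rw [h3]; gcongr
          _ = Mn * (2+C)^n := by field_simp
    have : q 0 = Polynomial.C ((q 0).eval 0) := by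
      rw [← coeff_zero_eq_eval_zero]
      exact Polynomial.eq_C_of_degree_le_zero hq0deg
    rw [this]
    simp [Polynomial.smul_eq_C_mul]
  · have IH' : ∀ j, j < m → q j = ∑ k ∈ range (j+1),
        ((q k).eval 0 / (Nat.factorial k : ℂ)) • (Polynomial.derivative^[k] (X ^ j : Polynomial ℂ)) :=
      fun j hj => IH j hj (le_trans hj.le hm)
    clear IH
    set a : ℕ → ℂ := fun k => (q k).eval 0 / (Nat.factorial k : ℂ) with ha
    set S : Module.End ℂ (Polynomial ℂ) :=
      ∑ k ∈ range m, a k • ((Polynomial.derivative : Module.End ℂ (Polynomial ℂ)) ^ k) with hS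
    have hSapp : ∀ p : Polynomial ℂ, S p = ∑ k ∈ range m, a k • (Polynomial.derivative^[k] p) := by
      intro p
      rw [hS, LinearMap.sum_apply]
      exact Finset.sum_congr rfl fun k _ => by
        rw [LinearMap.smul_apply, Module.End.pow_apply]
    -- IH in operator form
    have hqj : ∀ j, j < m → q j = S (X ^ j) := by
      intro j hj
      rw [IH' j hj, hSapp]
      apply Finset.sum_subset (Finset.range_subset_range.mpr (by omega))
      intro k _ hk
      have hk' : j < k := by simp only [Finset.mem_range] at hk; omega
      rw [Polynomial.iterate_derivative_eq_zero (by simpa [natDegree_X_pow] using hk'), smul_zero]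
    set E : Polynomial ℂ := q m - S (X ^ m) with hE
    -- key decomposition
    have key : ∀ b : ℂ, (∑ j ∈ range (n+1), Polynomial.C (((X - Polynomial.C b)^m).coeff j) * q j)
        = S ((X - Polynomial.C b)^m) + E := by
      intro b
      set p : Polynomial ℂ := (X - Polynomial.C b)^m with hp
      have hmonic : p.Monic := (monic_X_sub_C b).pow m
      have hnd : p.natDegree = m := by
        rw [hp, natDegree_pow, natDegree_X_sub_C, mul_one]
      have h1 : ∑ j ∈ range (n+1), Polynomial.C (p.coeff j) * q j
          = ∑ j ∈ range (m+1), Polynomial.C (p.coeff j) * q j := by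
        symm
        apply Finset.sum_subset (Finset.range_subset_range.mpr (by omega))
        intro j _ hj
        have : m < j := by simp only [Finset.mem_range] at hj; omega
        rw [coeff_eq_zero_of_natDegree_lt (by omega : p.natDegree < j), map_zero, zero_mul]
      have hcm : p.coeff m = 1 := by
        have := hmonic.coeff_natDegree; rwa [hnd] at this
      rw [h1, Finset.sum_range_succ, hcm, map_one, one_mul]
      have h2 : ∀ j ∈ range m, Polynomial.C (p.coeff j) * q j = S ((p.coeff j) • (X ^ j)) := by
        intro j hj
        rw [map_smul, ← hqj j (Finset.mem_range.mp hj), Polynomial.smul_eq_C_mul]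
      rw [Finset.sum_congr rfl h2, ← map_sum]
      have h3 : (∑ j ∈ range m, (p.coeff j) • (X ^ j : Polynomial ℂ)) = p - X ^ m := by
        have h4 := p.as_sum_range' (m+1) (by omega)
        rw [Finset.sum_range_succ, hcm] at h4
        have : ∀ j : ℕ, (monomial j) (p.coeff j) = (p.coeff j) • (X ^ j : Polynomial ℂ) := by
          intro j; rw [Polynomial.smul_eq_C_mul, C_mul_X_pow_eq_monomial]
        rw [X_pow_eq_monomial]
        conv_rhs => rw [h4]
        simp_rw [this]
        abel
      rw [h3, map_sub, hE]
      abel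
    -- E is bounded far out, so constant
    have hEdeg : E.degree ≤ 0 := by
      apply degLe0_of_bdd _
        (∑ k ∈ range m, Complex.abs (a k) * (Nat.descFactorial m k) * (1+C)^m)
      intro R
      set b : ℂ := ((max R 0 + C : ℝ) : ℂ) with hb
      set p : Polynomial ℂ := (X - Polynomial.C b)^m with hp
      have hdp : p.degree = m := by
        rw [hp, degree_pow, degree_X_sub_C, nsmul_eq_mul, mul_one]
      obtain ⟨u, v, hu, hv, huv⟩ := H p (by rw [hdp]; exact_mod_cast Nat.lt_succ_of_le hm)
        (by rw [hdp]; exact_mod_cast hm1)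
      have hub : u = b := by
        have h0 := hu
        simp only [IsRoot, hp, eval_pow, eval_sub, eval_X, eval_C] at h0
        have := pow_eq_zero_iff hm1.ne' |>.mp h0
        exact sub_eq_zero.mp this
      rw [key b] at hv
      have hev : (S p).eval v + E.eval v = 0 := by simpa [IsRoot] using hv
      have hvb : Complex.abs (v - b) ≤ C := by
        rw [← Complex.abs.map_sub]; rwa [hub] at huv
      refine ⟨v, ?_, ?_⟩
      · have h1 : Complex.abs b - Complex.abs v ≤ C :=
          le_trans (by simpa [Complex.norm_eq_abs] using norm_sub_norm_le b v)
            (by rw [← Complex.abs.map_sub]; exact hvb)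
        have h2 : Complex.abs b = max R 0 + C := by
          rw [hb, Complex.abs_ofReal, abs_of_nonneg (by positivity)]
        have h3 := le_max_left R 0
        linarith
      · have h4 : (S p).eval v = ∑ k ∈ range m, a k * ((Nat.descFactorial m k : ℂ) * (v - b)^(m-k)) := by
          rw [hSapp, eval_finset_sum]
          refine Finset.sum_congr rfl fun k hk => ?_
          rw [hp, Polynomial.iterate_derivative_X_sub_pow, eval_smul, smul_eq_mul]
          congr 1
          rw [nsmul_eq_mul]
          simp [eval_pow]
        have h5 : Complex.abs (E.eval v) = Complex.abs ((S p).eval v) := by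
          have : E.eval v = -((S p).eval v) := by linear_combination hev
          rw [this, map_neg_eq_map]
        rw [h5, h4]
        refine le_trans (Complex.abs.sum_le _ _) (Finset.sum_le_sum fun k hk => ?_)
        rw [map_mul, map_mul, Complex.abs_natCast, map_pow]
        have h6 : Complex.abs (v - b) ^ (m - k) ≤ (1 + C)^m := by
          calc Complex.abs (v - b) ^ (m - k) ≤ (1+C) ^ (m-k) :=
                pow_le_pow_left₀ (Complex.abs.nonneg _) (by linarith) _
            _ ≤ (1+C)^m := by
                apply pow_le_pow_right₀ (by linarith) (by omega)
        calc Complex.abs (a k) * ((Nat.descFactorial m k : ℝ) * Complex.abs (v - b) ^ (m - k))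
            ≤ Complex.abs (a k) * ((Nat.descFactorial m k : ℝ) * (1+C)^m) := by
              gcongr
          _ = Complex.abs (a k) * (Nat.descFactorial m k : ℝ) * (1+C)^m := by ring
    -- E is the constant (q m).eval 0
    have hE0 : E.eval 0 = (q m).eval 0 := by
      rw [hE, eval_sub, hSapp, eval_finset_sum]
      have hz : ∀ k ∈ range m, ((a k • (Polynomial.derivative^[k] (X^m : Polynomial ℂ))).eval 0) = 0 := by
        intro k hk
        rw [Polynomial.iterate_derivative_X_pow_eq_smul, eval_smul, eval_smul, eval_pow, eval_X,
          zero_pow (by simp at hk; omega : m - k ≠ 0), smul_zero, smul_zero]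
      rw [Finset.sum_eq_zero hz, sub_zero]
    have hEC : E = Polynomial.C ((q m).eval 0) := by
      rw [← hE0, ← coeff_zero_eq_eval_zero]
      exact Polynomial.eq_C_of_degree_le_zero hEdeg
    -- conclude
    have hqm : q m = S (X ^ m) + Polynomial.C ((q m).eval 0) := by
      rw [← hEC, hE]; abel
    rw [hqm, Finset.sum_range_succ, hSapp]
    congr 1
    rw [Polynomial.iterate_derivative_X_pow_eq_smul, Nat.descFactorial_self, Nat.sub_self, pow_zero]
    rw [smul_smul, div_mul_cancel₀ _ (Nat.cast_ne_zero.mpr (Nat.factorial_ne_zero m)),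
      Polynomial.smul_eq_C_mul, mul_one]

lemma core0 (n : ℕ) (hn : 0 < n) (q : ℕ → Polynomial ℂ)
    (hdeg : ∀ j, j ≤ n → (q j).natDegree ≤ n)
    (C : ℝ) (hC : 0 < C)
    (H : ∀ p : Polynomial ℂ, p.degree < ((n+1 : ℕ) : WithBot ℕ) → 0 < p.degree →
      ∃ u v, p.IsRoot u ∧ (∑ j ∈ range (n+1), Polynomial.C (p.coeff j) * q j).IsRoot v ∧
        Complex.abs (u - v) ≤ C)
    (hq : ∃ j, j ≤ n ∧ q j ≠ 0) :
    (q 0).eval 0 ≠ 0 := by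
  intro h0
  have hq0 : q 0 = 0 := by
    have h1 := core n hn q hdeg C hC H 0 (Nat.zero_le n)
    simp only [zero_add, Finset.range_one, Finset.sum_singleton, Function.iterate_zero, id_eq,
      pow_zero, Nat.factorial_zero, Nat.cast_one, div_one, h0, zero_smul] at h1
    exact h1
  obtain ⟨j0, hj0n, hj0⟩ := hq
  have hex : ∃ j, q j ≠ 0 := ⟨j0, hj0⟩
  set m := Nat.find hex with hmdef
  have hqm : q m ≠ 0 := Nat.find_spec hex
  have hmin : ∀ j, j < m → q j = 0 := fun j hj => by
    have := Nat.find_min hex hj; simpa using this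
  have hm1 : 0 < m := by
    rcases Nat.eq_zero_or_pos m with h | h
    · exact absurd (h ▸ hqm) (by simp [hq0])
    · exact h
  have hmn : m ≤ n := le_trans (Nat.find_min' hex hj0) hj0n
  have hdegm : (q m).degree ≤ 0 := by
    apply degLe0_of_bdd _ 0
    intro R
    set b : ℂ := ((max R 0 + C : ℝ) : ℂ) with hb
    set p : Polynomial ℂ := (X - Polynomial.C b)^m with hp
    have hdp : p.degree = m := by
      rw [hp, degree_pow, degree_X_sub_C, nsmul_eq_mul, mul_one]
    obtain ⟨u, v, hu, hv, huv⟩ := H p (by rw [hdp]; exact_mod_cast Nat.lt_succ_of_le hmn)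
      (by rw [hdp]; exact_mod_cast hm1)
    have hub : u = b := by
      have hroot := hu
      simp only [IsRoot, hp, eval_pow, eval_sub, eval_X, eval_C] at hroot
      exact sub_eq_zero.mp (pow_eq_zero_iff hm1.ne' |>.mp hroot)
    have hsum : (∑ j ∈ range (n+1), Polynomial.C (p.coeff j) * q j) = q m := by
      rw [Finset.sum_eq_single_of_mem m (Finset.mem_range.mpr (by omega))]
      · have hcm : p.coeff m = 1 := by
          have h2 : p.natDegree = m := by rw [hp, natDegree_pow, natDegree_X_sub_C, mul_one]
          have := ((monic_X_sub_C b).pow m).coeff_natDegree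
          rwa [h2] at this
        rw [hcm, map_one, one_mul]
      · intro j hjr hjm
        rcases lt_or_gt_of_ne hjm with h | h
        · rw [hmin j h, mul_zero]
        · rw [coeff_eq_zero_of_natDegree_lt
            (by rw [hp, natDegree_pow, natDegree_X_sub_C, mul_one]; omega), map_zero, zero_mul]
    rw [hsum] at hv
    refine ⟨v, ?_, le_of_eq (by rw [show eval v (q m) = 0 from hv, map_zero])⟩
    have h1 : Complex.abs b - Complex.abs v ≤ C :=
      le_trans (by simpa [Complex.norm_eq_abs] using norm_sub_norm_le b v)
        (by rwa [hub] at huv)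
    have h2 : Complex.abs b = max R 0 + C := by
      rw [hb, Complex.abs_ofReal, abs_of_nonneg (by positivity)]
    have h3 := le_max_left R 0
    linarith
  obtain ⟨u, v, hu, hv, huv⟩ := by
    refine H ((X - Polynomial.C 0)^m) ?_ ?_
    · rw [degree_pow, degree_X_sub_C, nsmul_eq_mul, mul_one]
      exact_mod_cast Nat.lt_succ_of_le hmn
    · rw [degree_pow, degree_X_sub_C, nsmul_eq_mul, mul_one]
      exact_mod_cast hm1
  have hsum : (∑ j ∈ range (n+1), Polynomial.C (((X - Polynomial.C (0:ℂ))^m).coeff j) * q j) = q m := by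
    rw [Finset.sum_eq_single_of_mem m (Finset.mem_range.mpr (by omega))]
    · have hcm : ((X - Polynomial.C (0:ℂ))^m).coeff m = 1 := by
        have h2 : ((X - Polynomial.C (0:ℂ))^m).natDegree = m := by
          rw [natDegree_pow, natDegree_X_sub_C, mul_one]
        have := ((monic_X_sub_C (0:ℂ)).pow m).coeff_natDegree
        rwa [h2] at this
      rw [hcm, map_one, one_mul]
    · intro j hjr hjm
      rcases lt_or_gt_of_ne hjm with h | h
      · rw [hmin j h, mul_zero]
      · rw [coeff_eq_zero_of_natDegree_lt
          (by rw [natDegree_pow, natDegree_X_sub_C, mul_one]; omega), map_zero, zero_mul]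
  rw [hsum] at hv
  have hconst : q m = Polynomial.C ((q m).eval 0) := by
    rw [← coeff_zero_eq_eval_zero]
    exact Polynomial.eq_C_of_degree_le_zero hdegm
  apply hqm
  rw [hconst] at hv ⊢
  simp only [IsRoot, eval_C] at hv
  rw [hv, map_zero]

/-- If a nonzero linear operator `T` on `P_n` is such that for some `C > 0` every
nonconstant `f ∈ P_n` has a root within distance `C` of some root of `Tf`, then
`T = a_0 I + a_1 D + ⋯ + a_n Dⁿ` with `a_k = (Tφ_k)(0)` and `a_0 ≠ 0`; in particular
`T` is an invertible element of `𝒟(P_n)`. -/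
theorem T_eq_sum_of_derivatives (n : ℕ) (hn : 0 < n)
    (T : Module.End ℂ (Pn n)) (hT : T ≠ 0) (C : ℝ) (hC : 0 < C)
    (hyp : ∀ f : Pn n, 0 < (f : Polynomial ℂ).degree →
      ∃ u v, (f : Polynomial ℂ).IsRoot u ∧ ((T f : Pn n) : Polynomial ℂ).IsRoot v ∧
        ‖u - v‖ ≤ C) :
    T = ∑ k : Fin (n + 1),
        (((T (phiP n k k.is_le) : Pn n) : Polynomial ℂ).eval 0) • (Dop n) ^ (k : ℕ) ∧
    ((T (phiP n 0 (Nat.zero_le n)) : Pn n) : Polynomial ℂ).eval 0 ≠ 0 ∧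
    T ∈ calD n ∧ IsUnit T := by
  have hmem : ∀ j : ℕ, j ≤ n → (X ^ j : Polynomial ℂ) ∈ Pn n := by
    intro j hj
    simp only [Pn, Polynomial.mem_degreeLT, degree_X_pow]
    exact_mod_cast Nat.lt_succ_of_le hj
  set mon : ℕ → Pn n := fun j => if h : j ≤ n then ⟨X ^ j, hmem j h⟩ else 0 with hmon
  set q : ℕ → Polynomial ℂ := fun j => ((T (mon j) : Pn n) : Polynomial ℂ) with hq
  have hmonval : ∀ j, j ≤ n → ((mon j : Pn n) : Polynomial ℂ) = X ^ j := by
    intro j h; rw [hmon]; simp [h]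
  have hmemdeg : ∀ f : Pn n, ((f : Polynomial ℂ)).natDegree ≤ n := by
    intro f
    have h2 := f.2
    simp only [Pn, Polynomial.mem_degreeLT] at h2
    rcases eq_or_ne (f : Polynomial ℂ) 0 with h | h
    · simp [h]
    · rw [Polynomial.degree_eq_natDegree h] at h2
      exact_mod_cast Nat.lt_succ_iff.mp (by exact_mod_cast h2)
  have hdeg : ∀ j, j ≤ n → (q j).natDegree ≤ n := fun j _ => hmemdeg _
  have hrepr : ∀ f : Pn n, f = ∑ j ∈ range (n+1), ((f : Polynomial ℂ).coeff j) • mon j := by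
    intro f
    apply Subtype.ext
    rw [Submodule.coe_sum]
    have h1 : ∀ j ∈ range (n+1), (((f : Polynomial ℂ).coeff j • mon j : Pn n) : Polynomial ℂ)
        = Polynomial.monomial j ((f : Polynomial ℂ).coeff j) := by
      intro j hj
      rw [SetLike.val_smul, hmonval j (Nat.lt_succ_iff.mp (Finset.mem_range.mp hj)),
        Polynomial.smul_eq_C_mul, C_mul_X_pow_eq_monomial]
    rw [Finset.sum_congr rfl h1]
    exact (f : Polynomial ℂ).as_sum_range' (n+1) (Nat.lt_succ_of_le (hmemdeg f))
  have Tq : ∀ f : Pn n, ((T f : Pn n) : Polynomial ℂ)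
      = ∑ j ∈ range (n+1), Polynomial.C ((f : Polynomial ℂ).coeff j) * q j := by
    intro f
    conv_lhs => rw [hrepr f]
    rw [map_sum, Submodule.coe_sum]
    refine Finset.sum_congr rfl fun j hj => ?_
    rw [map_smul, SetLike.val_smul, Polynomial.smul_eq_C_mul, hq]
  have H : ∀ p : Polynomial ℂ, p.degree < ((n+1 : ℕ) : WithBot ℕ) → 0 < p.degree →
      ∃ u v, p.IsRoot u ∧ (∑ j ∈ range (n+1), Polynomial.C (p.coeff j) * q j).IsRoot v ∧
        Complex.abs (u - v) ≤ C := by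
    intro p hdp hp0
    have hpm : p ∈ Pn n := by simp only [Pn, Polynomial.mem_degreeLT]; exact_mod_cast hdp
    obtain ⟨u, v, h1, h2, h3⟩ := hyp ⟨p, hpm⟩ (by exact_mod_cast hp0)
    exact ⟨u, v, h1, by rwa [Tq ⟨p, hpm⟩] at h2, h3⟩
  have hqne : ∃ j, j ≤ n ∧ q j ≠ 0 := by
    by_contra h
    push_neg at h
    apply hT
    apply LinearMap.ext
    intro f
    apply Subtype.ext
    rw [Tq f, Finset.sum_eq_zero, LinearMap.zero_apply, ZeroMemClass.coe_zero]
    intro j hj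
    rw [h j (Nat.lt_succ_iff.mp (Finset.mem_range.mp hj)), mul_zero]
  have hform := core n hn q hdeg C hC H
  have hnonzero := core0 n hn q hdeg C hC H hqne
  have hphi : ∀ (k : ℕ) (h : k ≤ n), ((T (phiP n k h) : Pn n) : Polynomial ℂ).eval 0
      = (q k).eval 0 / (Nat.factorial k : ℂ) := by
    intro k h
    have hpk : phiP n k h = ((Nat.factorial k : ℂ))⁻¹ • mon k := by
      apply Subtype.ext
      rw [SetLike.val_smul, hmonval k h, phiP, Polynomial.smul_eq_C_mul]
    rw [hpk, map_smul, SetLike.val_smul, Polynomial.eval_smul, smul_eq_mul, div_eq_inv_mul]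
  have hTmon : ∀ j, ((T (mon j) : Pn n) : Polynomial ℂ) = q j := fun j => rfl
  have hDop : ∀ (k : ℕ) (f : Pn n),
      ((((Dop n)^k) f : Pn n) : Polynomial ℂ) = Polynomial.derivative^[k] (f : Polynomial ℂ) := by
    intro k
    induction k with
    | zero => intro f; simp
    | succ k ih =>
      intro f
      rw [pow_succ, Module.End.mul_apply, ih (Dop n f), Dop, LinearMap.restrict_apply,
        Function.iterate_succ_apply]
  have hkey : ∀ j, j ≤ n → T (mon j) = (∑ k : Fin (n + 1),
      (((T (phiP n k k.is_le) : Pn n) : Polynomial ℂ).eval 0) • (Dop n) ^ (k : ℕ)) (mon j) := by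
    intro j h
    apply Subtype.ext
    rw [LinearMap.sum_apply, Submodule.coe_sum, hTmon j, hform j h]
    have h1 : ∀ k : Fin (n+1),
        (((((T (phiP n k k.is_le) : Pn n) : Polynomial ℂ).eval 0 • (Dop n) ^ (k : ℕ)) (mon j) : Pn n) : Polynomial ℂ)
        = ((q (k:ℕ)).eval 0 / (Nat.factorial (k : ℕ) : ℂ)) •
            Polynomial.derivative^[(k : ℕ)] (X ^ j : Polynomial ℂ) := by
      intro k
      rw [LinearMap.smul_apply, SetLike.val_smul, hDop, hmonval j h, hphi k k.is_le]
    calc ∑ k ∈ range (j+1), ((q k).eval 0 / (Nat.factorial k : ℂ)) •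
            Polynomial.derivative^[k] (X ^ j : Polynomial ℂ)
        = ∑ k ∈ range (n+1), ((q k).eval 0 / (Nat.factorial k : ℂ)) •
            Polynomial.derivative^[k] (X ^ j : Polynomial ℂ) := by
          apply Finset.sum_subset (Finset.range_subset_range.mpr (by omega))
          intro k _ hk
          rw [Polynomial.iterate_derivative_eq_zero
            (by rw [natDegree_X_pow]; simp only [Finset.mem_range] at hk ⊢; omega), smul_zero]
      _ = ∑ k : Fin (n+1), ((q (k:ℕ)).eval 0 / (Nat.factorial (k:ℕ) : ℂ)) •
            Polynomial.derivative^[(k:ℕ)] (X ^ j : Polynomial ℂ) :=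
          (Fin.sum_univ_eq_sum_range _ _).symm
      _ = _ := Finset.sum_congr rfl fun k _ => (h1 k).symm
  have Tsum : T = ∑ k : Fin (n + 1),
      (((T (phiP n k k.is_le) : Pn n) : Polynomial ℂ).eval 0) • (Dop n) ^ (k : ℕ) := by
    apply LinearMap.ext
    intro f
    conv_lhs => rw [hrepr f]
    rw [map_sum]
    conv_rhs => rw [hrepr f]
    rw [map_sum]
    refine Finset.sum_congr rfl fun j hj => ?_
    rw [map_smul, map_smul, hkey j (Nat.lt_succ_iff.mp (Finset.mem_range.mp hj))]
  have ha0 : ((T (phiP n 0 (Nat.zero_le n)) : Pn n) : Polynomial ℂ).eval 0 ≠ 0 := by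
    rw [hphi 0 (Nat.zero_le n)]
    simpa using hnonzero
  refine ⟨Tsum, ha0, ?_, ?_⟩
  · rw [Tsum]
    exact Submodule.sum_mem _ fun k _ => Submodule.smul_mem _ _
      (Submodule.subset_span ⟨k, rfl⟩)
  · -- IsUnit
    set c : ℕ → ℂ := fun k => (q k).eval 0 / (Nat.factorial k : ℂ) with hc
    have hT' : T = ∑ k ∈ range (n+1), c k • (Dop n) ^ k := by
      rw [Tsum, ← Fin.sum_univ_eq_sum_range (fun k => c k • (Dop n) ^ k)]
      exact Finset.sum_congr rfl fun k _ => by rw [hphi k k.is_le]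
    have hc0 : c 0 ≠ 0 := by simpa [hc] using hnonzero
    rw [hT', Finset.sum_range_succ']
    simp only [pow_zero]
    have hDn : (Dop n) ^ (n+1) = 0 := by
      apply LinearMap.ext
      intro f
      apply Subtype.ext
      rw [hDop, Polynomial.iterate_derivative_eq_zero (Nat.lt_succ_of_le (hmemdeg f))]
      simp
    have hN : IsNilpotent (∑ k ∈ range n, c (k+1) • (Dop n) ^ (k+1)) := by
      have hBD : (∑ k ∈ range n, c (k+1) • (Dop n) ^ (k+1))
          = (∑ k ∈ range n, c (k+1) • (Dop n) ^ k) * (Dop n) := by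
        rw [Finset.sum_mul]
        exact Finset.sum_congr rfl fun k _ => by rw [smul_mul_assoc, ← pow_succ]
      have hcomm : Commute (∑ k ∈ range n, c (k+1) • (Dop n) ^ k) (Dop n) :=
        Commute.sum_left _ _ _ fun k _ => ((Commute.refl (Dop n)).pow_left k).smul_left _
      exact ⟨n+1, by rw [hBD, hcomm.mul_pow, hDn, mul_zero]⟩
    have hu : IsUnit (c 0 • (1 : Module.End ℂ (Pn n))) := by
      refine isUnit_iff_exists.mpr ⟨(c 0)⁻¹ • (1 : Module.End ℂ (Pn n)), ?_, ?_⟩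
      · rw [smul_mul_smul_comm, mul_inv_cancel₀ hc0, mul_one, one_smul]
      · rw [smul_mul_smul_comm, inv_mul_cancel₀ hc0, mul_one, one_smul]
    exact hN.isUnit_add_right_of_commute hu ((Commute.one_right _).smul_right _)
end

section
/- For the operator H_k(γ) = I − γ D^k on P_n (1 ≤ k ≤ n, γ ∈ ℂ), the root radius of H_k(γ)φ_n equals (|γ| n!/(n−k)!)^{1/k}; consequently K_h(H_k(γ)) = (|γ| n!/(n−k)!)^{1/k}, where K_h(T) = sup over nonconstant f ∈ P_n of the maximum over roots v of Tf of the distance from v to the root set of f. -/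
open Polynomial Metric

/-- The root radius of a polynomial: the maximum (supremum) of the moduli of its roots. -/
noncomputable def rootRadius (p : Polynomial ℂ) : ℝ :=
  sSup ((fun z : ℂ => ‖z‖) '' {z : ℂ | p.IsRoot z})

/-- The set of roots of a polynomial. -/
def Zset (p : Polynomial ℂ) : Set ℂ := {z : ℂ | p.IsRoot z}

/-- The (asymmetric Hausdorff) distance `d_h(A, B) = sup_{y ∈ B} inf_{x ∈ A} |x - y|`. -/
noncomputable def dh (A B : Set ℂ) : ℝ := sSup ((fun y => Metric.infDist y A) '' B)

/-- `K_h(T) = sup { d_h(Z(f), Z(Tf)) : f ∈ P_n nonconstant }`. -/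
noncomputable def Kh (n : ℕ) (T : Module.End ℂ (Pn n)) : ℝ :=
  sSup {d : ℝ | ∃ f : Pn n, 0 < (f : Polynomial ℂ).degree ∧
    d = dh (Zset (f : Polynomial ℂ)) (Zset ((T f : Pn n) : Polynomial ℂ))}

lemma descFact_id (m k : ℕ) :
    ((m+1).descFactorial (k+1) : ℝ) = (k+1) * m.descFactorial k + m.descFactorial (k+1) := by
  rcases le_or_gt k m with h | h
  · have : (m+1).descFactorial (k+1) = (k+1) * m.descFactorial k + m.descFactorial (k+1) := by
      rw [Nat.succ_descFactorial_succ, Nat.descFactorial_succ]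
      have h1 : m + 1 = (k+1) + (m - k) := by omega
      rw [h1, Nat.add_mul]
    exact_mod_cast this
  · rw [Nat.descFactorial_eq_zero_iff_lt.2 h, Nat.descFactorial_eq_zero_iff_lt.2 (by omega),
      Nat.descFactorial_eq_zero_iff_lt.2 (by omega)]
    simp

lemma iter_deriv_linear_mul (z : ℂ) (g : ℂ[X]) :
    ∀ k, derivative^[k+1] ((X - C z) * g) =
      ((k : ℂ[X])+1) * derivative^[k] g + (X - C z) * derivative^[k+1] g := by
  intro k
  induction k with
  | zero => simp [derivative_mul]
  | succ k ih =>
    have h2 : ∀ j, derivative (derivative^[j] g) = derivative^[j+1] g :=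
      fun j => (Function.iterate_succ_apply' derivative j g).symm
    rw [Function.iterate_succ_apply', ih, derivative_add, derivative_mul, derivative_mul,
      derivative_sub, derivative_X, derivative_C, sub_zero, one_mul, h2, h2]
    rw [derivative_add, derivative_natCast, derivative_one]
    push_cast
    ring

lemma deriv_bound (N : ℕ) : ∀ f : ℂ[X], f.natDegree ≤ N → ∀ v : ℂ, ∀ d : ℝ, 0 < d →
    (∀ z : ℂ, f.IsRoot z → d ≤ ‖v - z‖) → ∀ k : ℕ,
    ‖(derivative^[k] f).eval v‖ ≤
      (f.natDegree.descFactorial k : ℝ) * ‖f.eval v‖ / d ^ k := by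
  induction N with
  | zero =>
    intro f hf v d hd hroots k
    cases k with
    | zero => simp
    | succ k =>
      have hf0 : f = C (f.coeff 0) :=
        Polynomial.eq_C_of_natDegree_eq_zero (Nat.le_zero.mp hf)
      rw [hf0, Polynomial.iterate_derivative_C (Nat.succ_pos k)]
      simp only [eval_zero, norm_zero]
      positivity
  | succ N ih =>
    intro f hf v d hd hroots k
    rcases le_or_gt f.natDegree N with hle | hgt
    · exact ih f hle v d hd hroots k
    have hdeg : f.natDegree = N + 1 := le_antisymm hf hgt
    have hfne : f ≠ 0 := fun h0 => by simp [h0] at hdeg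
    obtain ⟨z, hz⟩ := Complex.exists_root (f := f)
      (by rw [degree_eq_natDegree hfne, hdeg]; exact_mod_cast Nat.succ_pos N)
    obtain ⟨g, hg⟩ := (dvd_iff_isRoot.2 hz)
    have hXz : (X - C z : ℂ[X]) ≠ 0 := X_sub_C_ne_zero z
    have hgne : g ≠ 0 := fun h0 => hfne (by rw [hg, h0, mul_zero])
    have hgdeg : g.natDegree = N := by
      have h1 := natDegree_mul hXz hgne
      rw [← hg, natDegree_X_sub_C, hdeg] at h1
      omega
    have hgroots : ∀ w, g.IsRoot w → d ≤ ‖v - w‖ := fun w hw =>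
      hroots w (by rw [hg]; simp [IsRoot, hw.eq_zero])
    have hvz : d ≤ ‖v - z‖ := hroots z hz
    have hfv : ‖f.eval v‖ = ‖v - z‖ * ‖g.eval v‖ := by
      rw [hg]; simp [eval_mul]
    cases k with
    | zero => simp
    | succ k =>
      have hgb1 := ih g hgdeg.le v d hd hgroots k
      have hgb2 := ih g hgdeg.le v d hd hgroots (k+1)
      rw [hg, iter_deriv_linear_mul]
      set a := ‖(derivative^[k] g).eval v‖ with ha
      set b := ‖(derivative^[k+1] g).eval v‖ with hb
      set c := ‖v - z‖ with hc
      set G := ‖g.eval v‖ with hG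
      have habs : ‖(((k : ℂ[X])+1) * derivative^[k] g
          + (X - C z) * derivative^[k+1] g).eval v‖ ≤ ((k:ℝ)+1) * a + c * b := by
        rw [eval_add, eval_mul, eval_mul, eval_sub, eval_X, eval_C]
        refine le_trans (norm_add_le _ _) ?_
        rw [norm_mul, norm_mul]
        gcongr
        · simp only [eval_add, eval_natCast, eval_one]
          rw [show ((k:ℂ)+1) = (((k:ℝ)+1 : ℝ) : ℂ) by push_cast; ring, Complex.norm_real, Real.norm_eq_abs]
          exact le_of_eq (abs_of_nonneg (by positivity))
      refine le_trans habs ?_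
      rw [hg] at hfv
      rw [hfv, natDegree_mul hXz hgne, natDegree_X_sub_C, hgdeg]
      rw [show 1 + N = N + 1 by ring, descFact_id]
      rw [hgdeg] at hgb1 hgb2
      have hG0 : (0:ℝ) ≤ G := norm_nonneg _
      have hdk : (0:ℝ) < d ^ k := pow_pos hd k
      have hdk1 : (0:ℝ) < d ^ (k+1) := pow_pos hd (k+1)
      have h1 : a * d ^ k ≤ (N.descFactorial k : ℝ) * G := by
        rw [← le_div_iff₀ hdk] at *; exact hgb1
      have h2 : b * d ^ (k+1) ≤ (N.descFactorial (k+1) : ℝ) * G := by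
        rw [← le_div_iff₀ hdk1] at *; exact hgb2
      rw [le_div_iff₀ hdk1]
      have hdc : 0 ≤ c - d := by linarith
      have e1 : ((k:ℝ)+1) * a * d^(k+1) = ((k:ℝ)+1) * (a * d^k) * d := by ring
      nlinarith [mul_le_mul_of_nonneg_left h1 (by positivity : (0:ℝ) ≤ (k:ℝ)+1),
        mul_le_mul_of_nonneg_left h2 (by linarith : (0:ℝ) ≤ c),
        mul_nonneg (mul_nonneg hG0 (Nat.cast_nonneg (N.descFactorial k))) hdc,
        mul_le_mul_of_nonneg_right hvz (mul_nonneg hG0 (Nat.cast_nonneg (N.descFactorial k)))]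


lemma coe_Dop_pow (n : ℕ) : ∀ (k : ℕ) (f : Pn n),
    ((((Dop n)^k) f : Pn n) : Polynomial ℂ) = derivative^[k] (f : Polynomial ℂ) := by
  intro k
  induction k with
  | zero => intro f; simp
  | succ k ih =>
    intro f
    rw [pow_succ, Module.End.mul_apply, Function.iterate_succ_apply, ih ((Dop n) f)]
    congr 1

lemma coe_H_apply (n k : ℕ) (γ : ℂ) (f : Pn n) :
    (((1 - γ • (Dop n)^k) f : Pn n) : Polynomial ℂ)
      = (f : Polynomial ℂ) - C γ * derivative^[k] (f : Polynomial ℂ) := by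
  have h : (1 - γ • (Dop n)^k) f = f - γ • (((Dop n)^k) f) := by
    simp [LinearMap.sub_apply, LinearMap.smul_apply, Module.End.one_apply]
  rw [h, Submodule.coe_sub, Submodule.coe_smul, coe_Dop_pow, smul_eq_C_mul]

lemma Hphi_eq (n k : ℕ) (γ : ℂ) :
    (((1 - γ • (Dop n)^k) (phiP n n le_rfl) : Pn n) : Polynomial ℂ) =
      C ((n.factorial : ℂ))⁻¹ * (X ^ n - C (γ * (n.descFactorial k : ℂ)) * X ^ (n-k)) := by
  rw [coe_H_apply]
  show (C ((n.factorial:ℂ))⁻¹ * X ^ n) - C γ * derivative^[k] (C ((n.factorial:ℂ))⁻¹ * X ^ n) = _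
  rw [iterate_derivative_C_mul, iterate_derivative_X_pow_eq_C_mul]
  rw [map_mul]
  ring

/-- For `H_k(γ) = I - γ D^k` on `P_n` (`1 ≤ k ≤ n`), the root radius of `H_k(γ)φ_n`
equals `(|γ| n!/(n-k)!)^{1/k}`, and consequently `K_h(H_k(γ)) = (|γ| n!/(n-k)!)^{1/k}`. -/
theorem Kh_Hk (n : ℕ) (hn : 0 < n) (k : ℕ) (hk1 : 1 ≤ k) (hk2 : k ≤ n) (γ : ℂ) :
    rootRadius (((1 - γ • (Dop n) ^ k) (phiP n n le_rfl) : Pn n) : Polynomial ℂ) =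
      (‖γ‖ * (Nat.factorial n : ℝ) / (Nat.factorial (n - k) : ℝ)) ^ (1 / (k : ℝ)) ∧
    Kh n (1 - γ • (Dop n) ^ k) =
      (‖γ‖ * (Nat.factorial n : ℝ) / (Nat.factorial (n - k) : ℝ)) ^ (1 / (k : ℝ)) := by
  have hk0 : (k:ℝ) ≠ 0 := Nat.cast_ne_zero.2 (by omega)
  set x : ℝ := ‖γ‖ * (Nat.factorial n : ℝ) / (Nat.factorial (n - k) : ℝ) with hxdef
  set r : ℝ := x ^ (1/(k:ℝ)) with hrdef
  have hfac : ((n-k).factorial : ℝ) * (n.descFactorial k : ℝ) = (n.factorial : ℝ) := by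
    exact_mod_cast Nat.factorial_mul_descFactorial hk2
  have hfacne : ((n-k).factorial : ℝ) ≠ 0 := by positivity
  have hx : x = ‖γ‖ * (n.descFactorial k : ℝ) := by
    rw [hxdef, ← hfac]
    field_simp
  have hx0 : (0:ℝ) ≤ x := by
    rw [hx]; positivity
  have hr0 : (0:ℝ) ≤ r := Real.rpow_nonneg hx0 _
  have hrk : r ^ k = x := by
    rw [hrdef, ← Real.rpow_natCast (x ^ (1/(k:ℝ))) k, ← Real.rpow_mul hx0,
      one_div_mul_cancel hk0, Real.rpow_one]
  set w : ℂ := γ * (n.descFactorial k : ℂ) with hwdef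
  have hwabs : ‖w‖ = x := by
    rw [hwdef, norm_mul, Complex.norm_natCast, hx]
  have hnk : n - k + k = n := Nat.sub_add_cancel hk2
  have hne : ((n.factorial : ℂ))⁻¹ ≠ 0 := inv_ne_zero (Nat.cast_ne_zero.2 n.factorial_ne_zero)
  have hroot : ∀ z : ℂ,
      (((1 - γ • (Dop n) ^ k) (phiP n n le_rfl) : Pn n) : Polynomial ℂ).IsRoot z
        ↔ z^(n-k) * (z^k - w) = 0 := by
    intro z
    have hev : (((1 - γ • (Dop n) ^ k) (phiP n n le_rfl) : Pn n) : Polynomial ℂ).eval z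
        = (n.factorial:ℂ)⁻¹ * (z^(n-k) * (z^k - w)) := by
      rw [Hphi_eq]
      simp only [eval_mul, eval_sub, eval_pow, eval_C, eval_X]
      rw [show z^n = z^(n-k)*z^k by rw [← pow_add, hnk]]
      ring
    rw [IsRoot, hev, mul_eq_zero]
    simp [hne]
  have hgr : IsGreatest ((fun z : ℂ => ‖z‖) ''
      {z : ℂ | (((1 - γ • (Dop n) ^ k) (phiP n n le_rfl) : Pn n) : Polynomial ℂ).IsRoot z}) r := by
    constructor
    · obtain ⟨ζ, hζ⟩ := Complex.exists_root (f := X^k - C w)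
        (by rw [degree_X_pow_sub_C (by omega) w]; exact_mod_cast (by omega : 0 < k))
      have hζk : ζ^k = w := by
        have h := hζ
        simp only [IsRoot, eval_sub, eval_pow, eval_X, eval_C, sub_eq_zero] at h
        exact h
      refine ⟨ζ, ?_, ?_⟩
      · simp only [Set.mem_setOf_eq]
        rw [hroot, hζk]
        simp
      · have h1 : ‖ζ‖ ^ k = x := by rw [← norm_pow, hζk, hwabs]
        exact (pow_left_inj₀ (norm_nonneg _) hr0 (by omega)).1 (h1.trans hrk.symm)
    · rintro t ⟨z, hz, rfl⟩
      rw [Set.mem_setOf_eq, hroot] at hz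
      rcases mul_eq_zero.1 hz with h | h
      · rcases Nat.eq_zero_or_pos (n-k) with h0 | h0
        · rw [h0, pow_zero] at h; exact absurd h one_ne_zero
        · have hz0 : z = 0 := pow_eq_zero_iff (by omega) |>.1 h
          show ‖z‖ ≤ r
          rw [hz0, norm_zero]; exact hr0
      · have h1 : ‖z‖ ^ k = x := by
          rw [← norm_pow, sub_eq_zero.1 h, hwabs]
        exact le_of_eq ((pow_left_inj₀ (norm_nonneg _) hr0 (by omega)).1
          (h1.trans hrk.symm))
  have hRR : rootRadius (((1 - γ • (Dop n) ^ k) (phiP n n le_rfl) : Pn n) : Polynomial ℂ) = r :=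
    hgr.csSup_eq
  -- upper bound for every nonconstant f
  have hub : ∀ f : Pn n, 0 < (f : Polynomial ℂ).degree →
      ∀ v ∈ Zset ((((1 - γ • (Dop n) ^ k) f : Pn n)) : Polynomial ℂ),
      Metric.infDist v (Zset (f : Polynomial ℂ)) ≤ r := by
    intro f hdegf v hv
    have hfne : (f : Polynomial ℂ) ≠ 0 := fun h0 => by simp [h0] at hdegf
    have hfn : (f : Polynomial ℂ).natDegree ≤ n := by
      have h2 := f.2
      simp only [Pn, Polynomial.mem_degreeLT] at h2
      have h3 : (f : Polynomial ℂ).natDegree < n + 1 :=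
        (Polynomial.natDegree_lt_iff_degree_lt hfne).2 (by exact_mod_cast h2)
      omega
    rw [Zset, Set.mem_setOf_eq, coe_H_apply] at hv
    have hv' : (f : Polynomial ℂ).eval v = γ * (derivative^[k] (f : Polynomial ℂ)).eval v := by
      have h := hv
      simp only [IsRoot, eval_sub, eval_mul, eval_C] at h
      linear_combination h
    set d := Metric.infDist v (Zset (f : Polynomial ℂ)) with hd
    rcases le_or_gt d 0 with hd0 | hd0
    · linarith
    have hdist : ∀ z, (f : Polynomial ℂ).IsRoot z → d ≤ ‖v - z‖ := by
      intro z hz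
      have hmem : z ∈ Zset (f : Polynomial ℂ) := hz
      have h := Metric.infDist_le_dist_of_mem (x := v) hmem
      rwa [Complex.dist_eq] at h
    have hb := deriv_bound (f : Polynomial ℂ).natDegree (f : Polynomial ℂ) le_rfl v d hd0 hdist k
    have hfv0 : (f : Polynomial ℂ).eval v ≠ 0 := by
      intro h0
      have hmem : v ∈ Zset (f : Polynomial ℂ) := h0
      rw [hd, Metric.infDist_zero_of_mem hmem] at hd0
      exact lt_irrefl _ hd0
    have hFv : 0 < ‖(f : Polynomial ℂ).eval v‖ := norm_pos_iff.2 hfv0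
    have hdF : ((f : Polynomial ℂ).natDegree.descFactorial k : ℝ) ≤ (n.descFactorial k : ℝ) :=
      Nat.cast_le.2 (Nat.descFactorial_le k hfn)
    have hdkpos : (0:ℝ) < d ^ k := pow_pos hd0 k
    have h1 : ‖(f : Polynomial ℂ).eval v‖ ≤ ‖γ‖ *
        ((n.descFactorial k : ℝ) * ‖(f : Polynomial ℂ).eval v‖ / d ^ k) := by
      nth_rewrite 1 [hv']
      rw [norm_mul]
      exact mul_le_mul_of_nonneg_left (le_trans hb (by gcongr)) (norm_nonneg γ)
    have h2 : ‖(f : Polynomial ℂ).eval v‖ * d ^ k ≤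
        ‖γ‖ * (n.descFactorial k : ℝ) * ‖(f : Polynomial ℂ).eval v‖ := by
      have h3 := mul_le_mul_of_nonneg_right h1 hdkpos.le
      calc ‖(f : Polynomial ℂ).eval v‖ * d ^ k ≤ _ := h3
        _ = ‖γ‖ * (n.descFactorial k : ℝ) * ‖(f : Polynomial ℂ).eval v‖ := by
          field_simp
    have hdk : d ^ k ≤ x := by
      rw [hx]
      nlinarith [h2, hFv]
    exact (pow_le_pow_iff_left₀ (n := k) hd0.le hr0 (by omega)).1 (by rw [hrk]; exact hdk)
  have hdh_le : ∀ f : Pn n, 0 < (f : Polynomial ℂ).degree →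
      dh (Zset (f : Polynomial ℂ)) (Zset ((((1 - γ • (Dop n) ^ k) f : Pn n)) : Polynomial ℂ)) ≤ r := by
    intro f hf
    apply Real.sSup_le _ hr0
    rintro t ⟨v, hv, rfl⟩
    exact hub f hf v hv
  refine ⟨hRR, le_antisymm ?_ ?_⟩
  · apply Real.sSup_le _ hr0
    rintro t ⟨f, hf, rfl⟩
    exact hdh_le f hf
  · apply le_csSup
    · exact ⟨r, by rintro t ⟨f, hf, rfl⟩; exact hdh_le f hf⟩
    · refine ⟨phiP n n le_rfl, ?_, ?_⟩
      · show (0:WithBot ℕ) < degree (C ((n.factorial : ℂ))⁻¹ * X ^ n)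
        rw [degree_C_mul_X_pow n hne]
        exact_mod_cast hn
      · have hZ0 : Zset ((phiP n n le_rfl : Pn n) : Polynomial ℂ) = {0} := by
          ext z
          show (C ((n.factorial : ℂ))⁻¹ * X ^ n).IsRoot z ↔ z ∈ ({0} : Set ℂ)
          simp only [IsRoot, eval_mul, eval_pow, eval_C, eval_X, mul_eq_zero,
            Set.mem_singleton_iff]
          constructor
          · rintro (h | h)
            · exact absurd h hne
            · exact pow_eq_zero_iff (by omega) |>.1 h
          · rintro rfl
            right
            exact zero_pow (by omega)
        rw [hZ0, dh]
        have himg : (fun y => Metric.infDist y ({0} : Set ℂ)) ''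
            (Zset ((((1 - γ • (Dop n) ^ k) (phiP n n le_rfl) : Pn n)) : Polynomial ℂ)) =
            (fun z : ℂ => ‖z‖) ''
            (Zset ((((1 - γ • (Dop n) ^ k) (phiP n n le_rfl) : Pn n)) : Polynomial ℂ)) := by
          apply Set.image_congr
          intro y _
          rw [Metric.infDist_singleton, Complex.dist_eq, sub_zero]
        rw [himg]
        exact (hgr.csSup_eq).symm
end
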